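/- The algebra P_n satisfies the identity (ab)(cd) = 0 for all a,b,c,d in P_n. -/

import Mathlib

inductive PBasis (n : ℕ) : Type
  | a : Fin n → Fin n → PBasis n
  | b : Fin n → Fin n → PBasis n
  | c : Fin n → PBasis n
  | d : Fin n → Fin n → PBasis n
  | e : Fin n → Fin n → PBasis n
  deriving DecidableEq

abbrev Pn (F : Type*) [Field F] (n : ℕ) : Type _ := PBasis n →₀ F

open PBasis in
noncomputable def mulB (F : Type*) [Field F] {n : ℕ} : PBasis n → PBasis n → Pn F n
  | a i j, c k => if k = i then Finsupp.single (d i j) 1 else 0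
  | b i j, c k => if k = i then Finsupp.single (e i j) 1 else 0
  | a i j, e k l => if i = k ∧ j = l then Finsupp.single (c j) 1 else 0
  | e k l, a i j => if i = k ∧ j = l then Finsupp.single (c j) 1 else 0
  | b i j, d k l => if i = k ∧ j = l then -Finsupp.single (c j) 1 else 0
  | d k l, b i j => if i = k ∧ j = l then -Finsupp.single (c j) 1 else 0
  | _, _ => 0

noncomputable def mulLin (F : Type*) [Field F] {n : ℕ} :
    Pn F n →ₗ[F] Pn F n →ₗ[F] Pn F n :=
  Finsupp.lift (Pn F n →ₗ[F] Pn F n) F (PBasis n)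
    (fun u => Finsupp.lift (Pn F n) F (PBasis n) (fun v => mulB F u v))

noncomputable instance (F : Type*) [Field F] (n : ℕ) : Mul (Pn F n) :=
  ⟨fun x y => mulLin F x y⟩

def DSet (n : ℕ) : Set (PBasis n) :=
  {t | match t with | .a _ _ => False | .b _ _ => False | _ => True}

lemma mul_def (F : Type*) [Field F] {n : ℕ} (x y : Pn F n) : x * y = mulLin F x y := rfl

lemma ite_mem' {F : Type*} [Field F] {n : ℕ} {p : Prop} [Decidable p] {x : Pn F n}
    {S : Submodule F (Pn F n)} (h : x ∈ S) : (if p then x else 0) ∈ S := by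
  split_ifs; exacts [h, S.zero_mem]

lemma mulB_mem (F : Type*) [Field F] {n : ℕ} (u v : PBasis n) :
    mulB F u v ∈ Finsupp.supported F F (DSet n) := by
  cases u <;> cases v <;>
    first
      | exact Submodule.zero_mem _
      | exact ite_mem' (Finsupp.single_mem_supported F (1:F) (by exact True.intro))
      | exact ite_mem' (Submodule.neg_mem _ (Finsupp.single_mem_supported F (1:F) (by exact True.intro)))

lemma mulB_DD (F : Type*) [Field F] {n : ℕ} (u v : PBasis n)
    (hu : u ∈ DSet n) (hv : v ∈ DSet n) : mulB F u v = 0 := by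
  cases u <;> cases v <;> first | rfl | exact absurd hu id | exact absurd hv id

lemma mul_mem_D (F : Type*) [Field F] {n : ℕ} (x y : Pn F n) :
    x * y ∈ Finsupp.supported F F (DSet n) := by
  rw [mul_def]
  induction x using Finsupp.induction_linear with
  | zero => simp
  | add p q hp hq => rw [map_add, LinearMap.add_apply]; exact Submodule.add_mem _ hp hq
  | single u r =>
    induction y using Finsupp.induction_linear with
    | zero => simp
    | add p q hp hq => rw [map_add]; exact Submodule.add_mem _ hp hq
    | single v s =>
      have : mulLin F (Finsupp.single u r) (Finsupp.single v s) = r • s • mulB F u v := by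
        simp [mulLin, Finsupp.lift_apply, Finsupp.sum_single_index]
      rw [this]
      exact Submodule.smul_mem _ _ (Submodule.smul_mem _ _ (mulB_mem F u v))

lemma DD_zero (F : Type*) [Field F] {n : ℕ} (p q : Pn F n)
    (hp : p ∈ Finsupp.supported F F (DSet n)) (hq : q ∈ Finsupp.supported F F (DSet n)) :
    p * q = 0 := by
  rw [Finsupp.supported_eq_span_single] at hp hq
  rw [mul_def]
  induction hp using Submodule.span_induction with
  | mem x hx =>
    obtain ⟨u, hu, rfl⟩ := hx
    induction hq using Submodule.span_induction with
    | mem y hy =>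
      obtain ⟨v, hv, rfl⟩ := hy
      have : mulLin F (Finsupp.single u 1) (Finsupp.single v 1) = mulB F u v := by
        simp [mulLin, Finsupp.lift_apply, Finsupp.sum_single_index]
      rw [this, mulB_DD F u v hu hv]
    | zero => simp
    | add a b _ _ ha hb => rw [map_add, ha, hb, add_zero]
    | smul r a _ ha => rw [map_smul, ha, smul_zero]
  | zero => simp
  | add a b _ _ ha hb => rw [map_add, LinearMap.add_apply, ha, hb, add_zero]
  | smul r a _ ha => rw [map_smul, LinearMap.smul_apply, ha, smul_zero]

theorem stmt (F : Type*) [Field F] (n : ℕ) :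
    ∀ x y z w : Pn F n, (x * y) * (z * w) = 0 := by
  intro x y z w
  exact DD_zero F _ _ (mul_mem_D F x y) (mul_mem_D F z w)
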